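/- After steps 1–3 of the connection procedure (before step 4), every component formed by chosen edges has depth at most 2: no vertex can have a grandparent via two chosen edges both selected in steps 1–3. -/
import Mathlib


section
variable {V : Type*} (par : V → Option V) (col : V → Fin 3)

/-- Step 1: every vertex of color 1 (here color `0`) that has a parent chooses
its parent. -/
def S1 : Set V := {v | col v = 0 ∧ ∃ u, par v = some u}

/-- Vertices marked "connected" after step 1: the choosers and the chosen
parents. -/
def C1 : Set V := S1 par col ∪ {u | ∃ v ∈ S1 par col, par v = some u}

/-- Step 2: every vertex of color 2 (here color `1`) that is not yet connected
and whose parent is not yet connected chooses its parent. -/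
def S2 : Set V := {v | col v = 1 ∧ v ∉ C1 par col ∧ ∃ u, par v = some u ∧ u ∉ C1 par col}

/-- Vertices marked "connected" after step 2. -/
def C2 : Set V := C1 par col ∪ S2 par col ∪ {u | ∃ v ∈ S2 par col, par v = some u}

/-- Step 3: likewise for color 3 (here color `2`). -/
def S3 : Set V := {v | col v = 2 ∧ v ∉ C2 par col ∧ ∃ u, par v = some u ∧ u ∉ C2 par col}

/-- Vertices marked "connected" after step 3. -/
def C3 : Set V := C2 par col ∪ S3 par col ∪ {u | ∃ v ∈ S3 par col, par v = some u}

/-- Step 4: every vertex still unconnected after steps 1–3 that has a parent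
chooses its parent. -/
def S4 : Set V := {v | v ∉ C3 par col ∧ ∃ u, par v = some u}

/-- The edge from `v` to its parent `u` is chosen during steps 1–3. -/
def chosen13 (v u : V) : Prop :=
  par v = some u ∧ v ∈ S1 par col ∪ S2 par col ∪ S3 par col

/-- The edge from `v` to its parent `u` is chosen during the whole procedure
(steps 1–4). -/
def chosen (v u : V) : Prop :=
  par v = some u ∧ v ∈ S1 par col ∪ S2 par col ∪ S3 par col ∪ S4 par col

end

/-- After steps 1–3 of the connection procedure on a properly 3-colored rooted
forest (before step 4), every component formed by chosen edges has depth at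
most 2: no vertex has a grandparent via two chosen edges both selected in
steps 1–3. -/
theorem stmt_12 {V : Type*} (par : V → Option V) (col : V → Fin 3)
    (hproper : ∀ v u, par v = some u → col v ≠ col u) :
    ¬ ∃ v u w : V, chosen13 par col v u ∧ chosen13 par col u w := by
  rintro ⟨v, u, w, ⟨hvu, hv⟩, ⟨huw, hu⟩⟩
  have hS1C2 : u ∈ S1 par col → u ∈ C2 par col := fun h => Or.inl (Or.inl (Or.inl h))
  have hS2C2 : u ∈ S2 par col → u ∈ C2 par col := fun h => Or.inl (Or.inr h)
  have hpar : ∀ {u'}, par v = some u' → u' = u := fun h => by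
    rw [hvu] at h; exact (Option.some_inj.mp h).symm
  rcases hv with (hv | hv) | hv <;> rcases hu with (hu | hu) | hu
  · exact hproper v u hvu (hv.1.trans hu.1.symm)
  · exact hu.2.1 (Or.inr ⟨v, hv, hvu⟩)
  · exact hu.2.1 (Or.inl (Or.inl (Or.inr ⟨v, hv, hvu⟩)))
  · obtain ⟨u', hu', hnc⟩ := hv.2.2
    exact (hpar hu' ▸ hnc) (Or.inl hu)
  · exact hproper v u hvu (hv.1.trans hu.1.symm)
  · exact hu.2.1 (Or.inr ⟨v, hv, hvu⟩)
  · obtain ⟨u', hu', hnc⟩ := hv.2.2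
    exact (hpar hu' ▸ hnc) (hS1C2 hu)
  · obtain ⟨u', hu', hnc⟩ := hv.2.2
    exact (hpar hu' ▸ hnc) (hS2C2 hu)
  · exact hproper v u hvu (hv.1.trans hu.1.symm)
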